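/- For any address α with nonempty first coordinate and index 2 ≤ d ≤ n, the baker's map satisfies B_d(α) = ⟨α.01₁, α.10₁⟩ ∘ B_d(α.0₁) ∘ B_d(α.1₁) as homeomorphisms of 𝔠ⁿ, where juxtaposition denotes composition and the factors on the right have pairwise disjoint supports except as forced by the formula. -/
import Mathlib


open scoped Classical

/-- Finite words over the alphabet `{0,1}`. -/
abbrev Word := List Bool
/-- Cantor space: infinite `{0,1}`-sequences. -/
abbrev Cantor := ℕ → Bool

/-- Concatenate a finite word with an infinite sequence. -/
def catW (α : Word) (w : Cantor) : Cantor :=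
  fun i => if h : i < α.length then α.get ⟨i, h⟩ else w (i - α.length)

/-- The basic open set of sequences having `α` as a prefix. -/
def GammaW (α : Word) : Set Cantor := Set.range (catW α)

/-- Incomparability of words: neither is a prefix of the other. -/
def IncompW (α β : Word) : Prop := ¬ α <+: β ∧ ¬ β <+: α

/-- Addresses: `n`-tuples of finite words. -/
abbrev Addr (n : ℕ) := Fin n → Word
/-- `n`-dimensional Cantor space. -/
abbrev CantorN (n : ℕ) := Fin n → Cantor

/-- The basic open set in `𝔠ⁿ` indexed by the address `α`. -/
def GammaN {n : ℕ} (α : Addr n) : Set (CantorN n) :=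
  { w | ∀ d, w d ∈ GammaW (α d) }

/-- Incomparability of addresses: some coordinate pair is incomparable. -/
def IncompA {n : ℕ} (α β : Addr n) : Prop := ∃ d, IncompW (α d) (β d)

/-- Drop the first `k` symbols of an infinite sequence. -/
def dropSeq (k : ℕ) (w : Cantor) : Cantor := fun i => w (i + k)

/-- Prepend the address `α` coordinatewise. -/
def catA {n : ℕ} (α : Addr n) (u : CantorN n) : CantorN n :=
  fun d => catW (α d) (u d)

/-- Remove the prefix `α` coordinatewise. -/
def dropA {n : ℕ} (α : Addr n) (w : CantorN n) : CantorN n :=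
  fun d => dropSeq ((α d).length) (w d)

/-- The transposition `⟨α β⟩` of `𝔠ⁿ`: exchanges `Γ(α)` and `Γ(β)` by prefix
substitution and fixes all other points. -/
noncomputable def swapN {n : ℕ} (α β : Addr n) : CantorN n → CantorN n :=
  fun w =>
    if w ∈ GammaN α then catA β (dropA α w)
    else if w ∈ GammaN β then catA α (dropA β w)
    else w

/-- Append the symbol `x` to the `d`-th coordinate of the address `α`. -/
def appA {n : ℕ} (α : Addr n) (d : Fin n) (x : Bool) : Addr n :=
  Function.update α d (α d ++ [x])

/-- Append the word `u` to the `d`-th coordinate of the address `α`. -/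
def appW {n : ℕ} (α : Addr n) (d : Fin n) (u : Word) : Addr n :=
  Function.update α d (α d ++ u)

/-- Coordinatewise concatenation of addresses. -/
def concatA {n : ℕ} (α η : Addr n) : Addr n := fun d => α d ++ η d

/-- The address with word `u` in coordinate `d` and empty words elsewhere. -/
def unitA {n : ℕ} (d : Fin n) (u : Word) : Addr n :=
  fun e => if e = d then u else []

/-- Prepend a letter to an infinite sequence. -/
def consSeq (b : Bool) (w : Cantor) : Cantor :=
  fun i => match i with
  | 0 => b
  | i + 1 => w i

/-- The full-support baker's map: moves the first letter of coordinate `1`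
to the front of coordinate `d`. -/
def bakerFull {n : ℕ} [NeZero n] (d : Fin n) : CantorN n → CantorN n :=
  fun w e =>
    if e = 0 then dropSeq 1 (w 0)
    else if e = d then consSeq (w 0 0) (w d)
    else w e

/-- The inverse of the full-support baker's map: moves the first letter of
coordinate `d` to the front of coordinate `1`. -/
def invBakerFull {n : ℕ} [NeZero n] (d : Fin n) : CantorN n → CantorN n :=
  fun w e =>
    if e = 0 then consSeq (w d 0) (w 0)
    else if e = d then dropSeq 1 (w d)
    else w e

/-- The index-`d` baker's map with support `Γ(α)`: sends `α.x₁.u ↦ α.x_d.u`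
and fixes all points outside `Γ(α)`. -/
noncomputable def bakerN {n : ℕ} [NeZero n] (d : Fin n) (α : Addr n) :
    CantorN n → CantorN n :=
  fun w => if w ∈ GammaN α then catA α (bakerFull d (dropA α w)) else w

/-- The inverse of the index-`d` baker's map with support `Γ(α)`. -/
noncomputable def invBakerN {n : ℕ} [NeZero n] (d : Fin n) (α : Addr n) :
    CantorN n → CantorN n :=
  fun w => if w ∈ GammaN α then catA α (invBakerFull d (dropA α w)) else w

/-- The partial prefix-substitution action of the symbol `⟨γ δ⟩` on addresses,
as a relation: `ActRel γ δ ζ ζ'` holds iff `ζ • ⟨γ δ⟩` is defined and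
equals `ζ'`. -/
def ActRel {n : ℕ} (γ δ ζ ζ' : Addr n) : Prop :=
  (∃ η, ζ = concatA γ η ∧ ζ' = concatA δ η) ∨
  (∃ η, ζ = concatA δ η ∧ ζ' = concatA γ η) ∨
  (IncompA ζ γ ∧ IncompA ζ δ ∧ ζ' = ζ)

/- ### Auxiliary lemmas -/

lemma dropSeq_add (k m : ℕ) (w : Cantor) :
    dropSeq k (dropSeq m w) = dropSeq (m + k) w := by
  funext i; simp only [dropSeq]; congr 1; omega

lemma dropSeq_catW (a : Word) (w : Cantor) : dropSeq a.length (catW a w) = w := by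
  funext i
  simp only [dropSeq, catW]
  rw [dif_neg (by omega)]
  congr 1; omega

lemma catW_inj (a : Word) : Function.Injective (catW a) := by
  intro x y h
  have := congrArg (dropSeq a.length) h
  rwa [dropSeq_catW, dropSeq_catW] at this

lemma catW_append (a b : Word) (w : Cantor) :
    catW (a ++ b) w = catW a (catW b w) := by
  funext i
  simp only [catW, List.length_append]
  by_cases h1 : i < a.length
  · rw [dif_pos (by omega), dif_pos h1]
    simp only [List.get_eq_getElem]
    exact List.getElem_append_left _
  · rw [dif_neg h1]
    by_cases h2 : i < a.length + b.length
    · rw [dif_pos h2, dif_pos (by omega)]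
      simp only [List.get_eq_getElem]
      exact List.getElem_append_right (by omega)
    · rw [dif_neg h2, dif_neg (by omega)]
      congr 1; omega

lemma mem_GammaW_iff (a : Word) (w : Cantor) :
    w ∈ GammaW a ↔ ∀ i, (h : i < a.length) → w i = a.get ⟨i, h⟩ := by
  constructor
  · rintro ⟨v, rfl⟩ i h
    simp [catW, h]
  · intro h
    refine ⟨dropSeq a.length w, ?_⟩
    funext i
    simp only [catW, dropSeq]
    split_ifs with h1
    · exact (h i h1).symm
    · congr 1; omega

lemma catW_mem_append (a s : Word) (v : Cantor) :
    catW a v ∈ GammaW (a ++ s) ↔ v ∈ GammaW s := by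
  constructor
  · rintro ⟨u, hu⟩
    rw [catW_append] at hu
    exact ⟨u, catW_inj a hu⟩
  · rintro ⟨u, rfl⟩
    exact ⟨u, catW_append a s u⟩

lemma GammaW_append_subset (a s : Word) : GammaW (a ++ s) ⊆ GammaW a := by
  rintro w ⟨u, rfl⟩
  exact ⟨catW s u, (catW_append a s u).symm⟩

lemma mem_GammaW_single (x : Bool) (w : Cantor) : w ∈ GammaW [x] ↔ w 0 = x := by
  rw [mem_GammaW_iff]
  constructor
  · intro h; exact h 0 (by simp)
  · intro h i hi
    simp only [List.length_cons, List.length_nil] at hi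
    interval_cases i
    simpa using h

lemma mem_GammaW_pair (x y : Bool) (w : Cantor) :
    w ∈ GammaW [x, y] ↔ w 0 = x ∧ w 1 = y := by
  rw [mem_GammaW_iff]
  constructor
  · intro h; exact ⟨h 0 (by simp), h 1 (by simp)⟩
  · rintro ⟨h0, h1⟩ i hi
    simp only [List.length_cons, List.length_nil] at hi
    interval_cases i
    · simpa using h0
    · simpa using h1

lemma mem_GammaN_iff {n : ℕ} (α : Addr n) (w : CantorN n) :
    w ∈ GammaN α ↔ ∃ u, w = catA α u := by
  constructor
  · intro h
    choose u hu using h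
    exact ⟨u, funext fun e => (hu e).symm⟩
  · rintro ⟨u, rfl⟩ e
    exact ⟨u e, rfl⟩

lemma catA_mem_appW {n : ℕ} (α : Addr n) (c : Fin n) (s : Word) (u : CantorN n) :
    catA α u ∈ GammaN (appW α c s) ↔ u c ∈ GammaW s := by
  constructor
  · intro h
    have h' := h c
    simp only [appW, catA, Function.update_self] at h'
    exact (catW_mem_append _ _ _).mp h'
  · intro h e
    by_cases he : e = c
    · subst he
      simp only [appW, catA, Function.update_self]
      exact (catW_mem_append _ _ _).mpr h
    · simp only [appW, catA, Function.update_of_ne he]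
      exact ⟨u e, rfl⟩

lemma GammaN_appW_subset {n : ℕ} (α : Addr n) (c : Fin n) (s : Word) :
    GammaN (appW α c s) ⊆ GammaN α := by
  intro w h e
  have h' := h e
  by_cases he : e = c
  · subst he
    simp only [appW, Function.update_self] at h'
    exact GammaW_append_subset _ _ h'
  · simpa only [appW, Function.update_of_ne he] using h'

lemma dropA_catA {n : ℕ} (α : Addr n) (u : CantorN n) : dropA α (catA α u) = u := by
  funext e
  show dropSeq (α e).length (catW (α e) (u e)) = u e
  exact dropSeq_catW _ _

lemma dropA_appW_catA {n : ℕ} (α : Addr n) (c : Fin n) (s : Word) (u : CantorN n) :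
    dropA (appW α c s) (catA α u) = Function.update u c (dropSeq s.length (u c)) := by
  funext e
  by_cases he : e = c
  · subst he
    simp only [dropA, appW, catA, Function.update_self, List.length_append]
    rw [← dropSeq_add, dropSeq_catW]
  · simp only [dropA, appW, catA, Function.update_of_ne he]
    rw [dropSeq_catW]

lemma catA_appW {n : ℕ} (α : Addr n) (c : Fin n) (s : Word) (v : CantorN n) :
    catA (appW α c s) v = catA α (Function.update v c (catW s (v c))) := by
  funext e
  by_cases he : e = c
  · subst he
    simp only [catA, appW, Function.update_self, catW_append]
  · simp only [catA, appW, Function.update_of_ne he]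

lemma appA_eq_appW {n : ℕ} (α : Addr n) (c : Fin n) (x : Bool) :
    appA α c x = appW α c [x] := rfl

lemma bakerFull_update0 {n : ℕ} [NeZero n] (d : Fin n) (hd : d ≠ 0)
    (u : CantorN n) (v : Cantor) :
    bakerFull d (Function.update u 0 v) =
      fun e => if e = 0 then dropSeq 1 v
        else if e = d then consSeq (v 0) (u e) else u e := by
  funext e
  by_cases he : e = 0
  · subst he
    simp [bakerFull]
  · by_cases hed : e = d
    · subst hed
      simp [bakerFull, he, Function.update_of_ne he, Function.update_self,
        Function.update_of_ne hd]
    · simp [bakerFull, he, hed, Function.update_of_ne he]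

lemma bakerN_self {n : ℕ} [NeZero n] (d : Fin n) (α : Addr n) (u : CantorN n) :
    bakerN d α (catA α u) = catA α (bakerFull d u) := by
  unfold bakerN
  rw [if_pos ((mem_GammaN_iff α _).mpr ⟨u, rfl⟩), dropA_catA]

lemma bakerN_appW_mem {n : ℕ} [NeZero n] (d : Fin n) (hd : d ≠ 0) (α : Addr n)
    (s : Word) (u : CantorN n) (hu : u 0 ∈ GammaW s) :
    bakerN d (appW α 0 s) (catA α u) =
      catA α (fun e => if e = 0 then catW s (dropSeq (s.length + 1) (u 0))
        else if e = d then consSeq (u 0 s.length) (u e) else u e) := by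
  unfold bakerN
  rw [if_pos ((catA_mem_appW α 0 s u).mpr hu), dropA_appW_catA, catA_appW,
    bakerFull_update0 d hd]
  refine congrArg (catA α) ?_
  funext e
  by_cases he : e = 0
  · subst he
    simp only [Function.update_self]
    simp [dropSeq_add]
  · rw [Function.update_of_ne he]
    by_cases hed : e = d
    · subst hed
      simp only [if_neg he, if_pos rfl]
      congr 1
      simp [dropSeq]
    · simp [he, hed]

lemma bakerN_appW_notMem {n : ℕ} [NeZero n] (d : Fin n) (α : Addr n)
    (s : Word) (u : CantorN n) (hu : u 0 ∉ GammaW s) :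
    bakerN d (appW α 0 s) (catA α u) = catA α u := by
  unfold bakerN
  rw [if_neg (fun h => hu ((catA_mem_appW α 0 s u).mp h))]

lemma swapN_mem1 {n : ℕ} [NeZero n] (α : Addr n) (s t : Word) (u : CantorN n)
    (hu : u 0 ∈ GammaW s) :
    swapN (appW α 0 s) (appW α 0 t) (catA α u) =
      catA α (Function.update u 0 (catW t (dropSeq s.length (u 0)))) := by
  unfold swapN
  rw [if_pos ((catA_mem_appW α 0 s u).mpr hu), dropA_appW_catA, catA_appW]
  simp

lemma swapN_notMem {n : ℕ} [NeZero n] (α : Addr n) (s t : Word) (u : CantorN n)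
    (hus : u 0 ∉ GammaW s) (hut : u 0 ∉ GammaW t) :
    swapN (appW α 0 s) (appW α 0 t) (catA α u) = catA α u := by
  unfold swapN
  rw [if_neg (fun h => hus ((catA_mem_appW α 0 s u).mp h)),
    if_neg (fun h => hut ((catA_mem_appW α 0 t u).mp h))]

lemma catW_single (x : Bool) (w : Cantor) : catW [x] w = consSeq x w := by
  funext i
  cases i with
  | zero => simp [catW, consSeq]
  | succ i => simp [catW, consSeq]

lemma dropSeq_one (w : Cantor) : dropSeq 1 w = consSeq (w 1) (dropSeq 2 w) := by
  funext i
  cases i with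
  | zero => simp [dropSeq, consSeq]
  | succ i =>
    simp only [dropSeq, consSeq]

lemma dropSeq_two_catW_pair (x y : Bool) (w : Cantor) :
    dropSeq 2 (catW [x, y] w) = w := by
  simpa using dropSeq_catW [x, y] w

lemma catW_pair_one (x y : Bool) (w : Cantor) : catW [x, y] w 1 = y := by
  simp [catW]

lemma swapN_mem2 {n : ℕ} [NeZero n] (α : Addr n) (s t : Word) (u : CantorN n)
    (hus : u 0 ∉ GammaW s) (hut : u 0 ∈ GammaW t) :
    swapN (appW α 0 s) (appW α 0 t) (catA α u) =
      catA α (Function.update u 0 (catW s (dropSeq t.length (u 0)))) := by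
  unfold swapN
  rw [if_neg (fun h => hus ((catA_mem_appW α 0 s u).mp h)),
    if_pos ((catA_mem_appW α 0 t u).mpr hut), dropA_appW_catA, catA_appW]
  simp

/-- The split formula for baker's maps in the first coordinate:
`B_d(α) = ⟨α.01₁, α.10₁⟩ ; B_d(α.0₁) ; B_d(α.1₁)` (factors applied left to
right). -/
theorem stmt10 (n : ℕ) [NeZero n] (hn : 2 ≤ n) (d : Fin n) (hd : d ≠ 0)
    (α : Addr n) (hα : α 0 ≠ ([] : Word)) :
    bakerN d α =
      bakerN d (appA α 0 true) ∘ bakerN d (appA α 0 false) ∘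
        swapN (appW α 0 [false, true]) (appW α 0 [true, false]) := by
  funext w
  simp only [Function.comp_apply, appA_eq_appW]
  by_cases hw : w ∈ GammaN α
  · obtain ⟨u, rfl⟩ := (mem_GammaN_iff α w).mp hw
    rw [bakerN_self]
    cases hb0 : u 0 0 with
    | false =>
      cases hb1 : u 0 1 with
      | false =>
        rw [swapN_notMem α _ _ u
          (by rw [mem_GammaW_pair]; simp [hb1])
          (by rw [mem_GammaW_pair]; simp [hb0])]
        rw [bakerN_appW_mem d hd α [false] u (by rw [mem_GammaW_single]; exact hb0)]
        rw [bakerN_appW_notMem d α [true] _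
          (by simp [mem_GammaW_single, catW])]
        refine congrArg (catA α) ?_
        funext e
        by_cases he : e = 0
        · subst he
          simp [bakerFull, dropSeq_one, catW_single, dropSeq_two_catW_pair, hb1,
            Function.update_self]
        · by_cases hed : e = d
          · subst hed
            simp [bakerFull, if_neg he, Function.update_of_ne he, Function.update_self,
              catW_pair_one, hb0, hb1, dropSeq_two_catW_pair]
          · simp [bakerFull, he, hed, Function.update_of_ne he]
      | true =>
        rw [swapN_mem1 α [false, true] [true, false] u
          (by rw [mem_GammaW_pair]; exact ⟨hb0, hb1⟩)]
        rw [bakerN_appW_notMem d α [false] _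
          (by simp [mem_GammaW_single, catW, Function.update_self])]
        rw [bakerN_appW_mem d hd α [true] _
          (by simp [mem_GammaW_single, catW, Function.update_self])]
        refine congrArg (catA α) ?_
        funext e
        by_cases he : e = 0
        · subst he
          simp [bakerFull, dropSeq_one, catW_single, dropSeq_two_catW_pair, hb1,
            Function.update_self]
        · by_cases hed : e = d
          · subst hed
            simp [bakerFull, if_neg he, Function.update_of_ne he, Function.update_self,
              catW_pair_one, hb0, hb1, dropSeq_two_catW_pair]
          · simp [bakerFull, he, hed, Function.update_of_ne he]
    | true =>
      cases hb1 : u 0 1 with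
      | false =>
        rw [swapN_mem2 α [false, true] [true, false] u
          (by rw [mem_GammaW_pair]; simp [hb0])
          (by rw [mem_GammaW_pair]; exact ⟨hb0, hb1⟩)]
        rw [bakerN_appW_mem d hd α [false] _
          (by simp [mem_GammaW_single, catW, Function.update_self])]
        rw [bakerN_appW_notMem d α [true] _
          (by simp [mem_GammaW_single, catW, Function.update_self])]
        refine congrArg (catA α) ?_
        funext e
        by_cases he : e = 0
        · subst he
          simp [bakerFull, dropSeq_one, catW_single, dropSeq_two_catW_pair, hb1,
            Function.update_self]
        · by_cases hed : e = d
          · subst hed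
            simp [bakerFull, if_neg he, Function.update_of_ne he, Function.update_self,
              catW_pair_one, hb0, hb1, dropSeq_two_catW_pair]
          · simp [bakerFull, he, hed, Function.update_of_ne he]
      | true =>
        rw [swapN_notMem α _ _ u
          (by rw [mem_GammaW_pair]; simp [hb0])
          (by rw [mem_GammaW_pair]; simp [hb1])]
        rw [bakerN_appW_notMem d α [false] _
          (by rw [mem_GammaW_single]; simp [hb0])]
        rw [bakerN_appW_mem d hd α [true] u (by rw [mem_GammaW_single]; exact hb0)]
        refine congrArg (catA α) ?_
        funext e
        by_cases he : e = 0
        · subst he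
          simp [bakerFull, dropSeq_one, catW_single, dropSeq_two_catW_pair, hb1,
            Function.update_self]
        · by_cases hed : e = d
          · subst hed
            simp [bakerFull, if_neg he, Function.update_of_ne he, Function.update_self,
              catW_pair_one, hb0, hb1, dropSeq_two_catW_pair]
          · simp [bakerFull, he, hed, Function.update_of_ne he]
  · have h01 : w ∉ GammaN (appW α 0 [false, true]) :=
      fun h => hw (GammaN_appW_subset α 0 _ h)
    have h10 : w ∉ GammaN (appW α 0 [true, false]) :=
      fun h => hw (GammaN_appW_subset α 0 _ h)
    have hf : w ∉ GammaN (appW α 0 [false]) :=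
      fun h => hw (GammaN_appW_subset α 0 _ h)
    have ht : w ∉ GammaN (appW α 0 [true]) :=
      fun h => hw (GammaN_appW_subset α 0 _ h)
    have e0 : bakerN d α w = w := by simp only [bakerN]; rw [if_neg hw]
    have e1 : swapN (appW α 0 [false, true]) (appW α 0 [true, false]) w = w := by
      simp only [swapN]; rw [if_neg h01, if_neg h10]
    have e2 : bakerN d (appW α 0 [false]) w = w := by
      simp only [bakerN]; rw [if_neg hf]
    have e3 : bakerN d (appW α 0 [true]) w = w := by
      simp only [bakerN]; rw [if_neg ht]
    rw [e0, e1, e2, e3]
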